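/- arXiv:1206.0319 — 3 statements merged into one kernel-verified Lean document; each statement's English description precedes it below -/
import Mathlib

section
/- Fix n, m1 ≤ n, m2 with m1 + m2 ≥ n + 1, and positive degrees d_1,…,d_{m1}, d_1′,…,d_{m2}′. There exists a real polynomial Φ in the coefficients of tuples (h_1,…,h_{m1}, g_1,…,g_{m2}) with h_i ∈ ℝ[x]_{d_i} and g_j ∈ ℝ[x]_{d_j′}, where Φ is not the identically zero polynomial, such that whenever Φ(h, g) ≠ 0: for every choice of indices 1 ≤ j_1 < ⋯ < j_{n−m1+1} ≤ m2, the polynomials h_1,…,h_{m1}, g_{j_1},…,g_{j_{n−m1+1}} have no common zero in ℂⁿ; in particular, at every point of K = {x ∈ ℝⁿ : h_i(x) = 0 (i ≤ m1), g_j(x) ≥ 0 (j ≤ m2)}, at most n − m1 of the inequality constraints g_j are active (i.e., vanish). -/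
open MvPolynomial
open scoped Classical

noncomputable section

set_option maxHeartbeats 1000000

lemma aux_le_sum {σ : Type*} (v : σ →₀ ℕ) (i : σ) : v i ≤ v.sum fun _ e => e := by
  by_cases hs : i ∈ v.support
  · exact Finset.single_le_sum (f := fun a => v a) (fun _ _ => Nat.zero_le _) hs
  · rw [Finsupp.notMem_support_iff.mp hs]; exact Nat.zero_le _

lemma aux_coeff_attach_sum {σ : Type*} (S : Finset (σ →₀ ℕ)) (c : {v // v ∈ S} → ℝ)
    (w : σ →₀ ℕ) (hw : w ∈ S) :
    MvPolynomial.coeff w (∑ v ∈ S.attach, MvPolynomial.monomial v.1 (c v)) = c ⟨w, hw⟩ := by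
  rw [MvPolynomial.coeff_sum]
  rw [Finset.sum_eq_single (⟨w, hw⟩ : {v // v ∈ S})]
  · rw [MvPolynomial.coeff_monomial, if_pos rfl]
  · intro v _ hv
    rw [MvPolynomial.coeff_monomial, if_neg]
    intro hc
    exact hv (Subtype.ext hc)
  · intro habs
    exact absurd (Finset.mem_attach _ _) habs

lemma aux_aeval_real {n : ℕ} (u : Fin n → ℝ) (p : MvPolynomial (Fin n) ℝ) :
    aeval (fun i => (u i : ℂ)) p = ((eval u p : ℝ) : ℂ) := by
  have h : ((aeval (fun i => (u i : ℂ)) : MvPolynomial (Fin n) ℝ →ₐ[ℝ] ℂ) :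
      MvPolynomial (Fin n) ℝ →+* ℂ)
      = (algebraMap ℝ ℂ).comp (eval u : MvPolynomial (Fin n) ℝ →+* ℝ) := by
    apply MvPolynomial.ringHom_ext <;> simp
  have := RingHom.congr_fun h p
  simpa using this


theorem aux_not_algIndep {σ τ : Type} [Fintype σ] [Fintype τ]
    (f : τ → MvPolynomial σ ℝ) (hcard : Fintype.card σ < Fintype.card τ) :
    ¬ AlgebraicIndependent ℝ f := by
  intro hind
  set N := Fintype.card τ with hN
  have hN1 : 1 ≤ N := by omega
  set c := (Finset.univ.sup fun t => (f t).totalDegree) + 1 with hc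
  have hfc : ∀ t, (f t).totalDegree ≤ c := fun t =>
    le_trans (Finset.le_sup (f := fun t => (f t).totalDegree) (Finset.mem_univ t)) (Nat.le_succ _)
  have hc1 : 1 ≤ c := Nat.le_add_left _ _
  set E := (c * N) ^ N with hE
  set D := N * E with hD
  -- the independent family of monomials
  let v : (τ → Fin (E + 1)) → (τ →₀ ℕ) :=
    fun e => Finsupp.equivFunOnFinite.symm fun t => (e t : ℕ)
  have hvinj : Function.Injective v := by
    intro a b hab
    have : (fun t => (a t : ℕ)) = fun t => (b t : ℕ) :=
      Finsupp.equivFunOnFinite.symm.injective hab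
    funext t
    exact Fin.val_injective (congrFun this t)
  have hvsum : ∀ e, ((v e).sum fun _ k => k) ≤ D := by
    intro e
    have h1 : ((v e).sum fun _ k => k) = ∑ t ∈ (v e).support, v e t := rfl
    rw [h1]
    calc ∑ t ∈ (v e).support, v e t ≤ ∑ t : τ, v e t :=
          Finset.sum_le_sum_of_subset (Finset.subset_univ _)
      _ ≤ ∑ _t : τ, E := Finset.sum_le_sum fun t _ => by
          show v e t ≤ E
          have hvet : v e t = (e t : ℕ) := rfl
          rw [hvet]
          exact Nat.lt_succ_iff.mp (e t).isLt
      _ = N * E := by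
          rw [Finset.sum_const, Finset.card_univ, smul_eq_mul, hN]
  -- linear independence of the images of the monomials
  have hmono : LinearIndependent ℝ fun e : τ → Fin (E + 1) => (monomial (v e) (1 : ℝ)) := by
    have hb := (basisMonomials τ ℝ).linearIndependent
    have h2 := hb.comp v hvinj
    have h3 : ((basisMonomials τ ℝ) ∘ v) = fun e : τ → Fin (E + 1) => (monomial (v e) (1 : ℝ)) := by
      funext e
      simp [coe_basisMonomials, Function.comp]
    rwa [h3] at h2
  have hker : LinearMap.ker (aeval f : MvPolynomial τ ℝ →ₐ[ℝ] MvPolynomial σ ℝ).toLinearMap = ⊥ := by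
    rw [LinearMap.ker_eq_bot]
    exact algebraicIndependent_iff_injective_aeval.mp hind
  have hF : LinearIndependent ℝ
      fun e : τ → Fin (E + 1) => aeval f (monomial (v e) (1 : ℝ)) := by
    have := hmono.map' (aeval f : MvPolynomial τ ℝ →ₐ[ℝ] MvPolynomial σ ℝ).toLinearMap hker
    exact this
  -- the spanning set
  let B : Finset (MvPolynomial σ ℝ) :=
    Finset.image (fun e : σ → Fin (c * D + 1) =>
      monomial (Finsupp.equivFunOnFinite.symm fun s => ((e s : ℕ))) (1 : ℝ)) Finset.univ
  have hspan : ∀ q : MvPolynomial σ ℝ, q.totalDegree ≤ c * D →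
      q ∈ Submodule.span ℝ (B : Set (MvPolynomial σ ℝ)) := by
    intro q hq
    rw [q.as_sum]
    refine Submodule.sum_mem _ fun w hw => ?_
    have h1 : monomial w (coeff w q) = (coeff w q) • monomial w (1 : ℝ) := by
      rw [smul_monomial, smul_eq_mul, mul_one]
    rw [h1]
    refine Submodule.smul_mem _ _ (Submodule.subset_span ?_)
    have hws : ∀ s, w s < c * D + 1 := by
      intro s
      have h2 : w s ≤ w.sum fun _ k => k := by
        by_cases hs : s ∈ w.support
        · exact Finset.single_le_sum (f := fun a => w a) (fun _ _ => Nat.zero_le _) hs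
        · rw [Finsupp.notMem_support_iff.mp hs]; exact Nat.zero_le _
      have h3 : (w.sum fun _ k => k) ≤ q.totalDegree := le_totalDegree hw
      omega
    rw [Finset.mem_coe, Finset.mem_image]
    refine ⟨fun s => ⟨w s, hws s⟩, Finset.mem_univ _, ?_⟩
    have h9 : (Finsupp.equivFunOnFinite.symm fun s =>
        (((⟨w s, hws s⟩ : Fin (c * D + 1))) : ℕ)) = w := by
      ext s; rfl
    show (monomial (Finsupp.equivFunOnFinite.symm fun s =>
        (((⟨w s, hws s⟩ : Fin (c * D + 1))) : ℕ))) (1 : ℝ) = (monomial w) 1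
    rw [h9]
  -- degree bound on images
  have hdegF : ∀ e : τ → Fin (E + 1),
      (aeval f (monomial (v e) (1 : ℝ))).totalDegree ≤ c * D := by
    intro e
    rw [aeval_monomial, map_one, one_mul]
    have h1 : ((v e).prod fun t k => f t ^ k) = ∏ t ∈ (v e).support, f t ^ (v e t) := rfl
    rw [h1]
    calc (∏ t ∈ (v e).support, f t ^ (v e t)).totalDegree
        ≤ ∑ t ∈ (v e).support, (f t ^ (v e t)).totalDegree :=
          totalDegree_finset_prod _ _
      _ ≤ ∑ t ∈ (v e).support, (v e t) * c := Finset.sum_le_sum fun t _ =>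
          le_trans (totalDegree_pow _ _) (Nat.mul_le_mul_left _ (hfc t))
      _ = ((v e).sum fun _ k => k) * c := by
          rw [show ((v e).sum fun _ k => k) = ∑ t ∈ (v e).support, v e t from rfl,
            Finset.sum_mul]
      _ ≤ D * c := Nat.mul_le_mul_right _ (hvsum e)
      _ = c * D := Nat.mul_comm _ _
  -- cardinality bound via span
  have hcard2 : Fintype.card (τ → Fin (E + 1)) ≤ B.card := by
    have := linearIndependent_le_span' _ hF (B : Set (MvPolynomial σ ℝ))
      (by rintro _ ⟨e, rfl⟩; exact hspan _ (hdegF e))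
    have h4 : Fintype.card (B : Set (MvPolynomial σ ℝ)) = B.card := Fintype.card_coe _
    rw [h4] at this
    rwa [Cardinal.mk_fintype, Nat.cast_le] at this
  have hBcard : B.card ≤ (c * D + 1) ^ Fintype.card σ := by
    calc B.card ≤ (Finset.univ : Finset (σ → Fin (c * D + 1))).card := Finset.card_image_le
      _ = (c * D + 1) ^ Fintype.card σ := by
        rw [Finset.card_univ, Fintype.card_fun, Fintype.card_fin]
  have hLam : Fintype.card (τ → Fin (E + 1)) = (E + 1) ^ N := by
    rw [Fintype.card_fun, Fintype.card_fin, hN]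
  -- final arithmetic
  have key : (E + 1) ^ N ≤ (c * D + 1) ^ (N - 1) := by
    calc (E + 1) ^ N = Fintype.card (τ → Fin (E + 1)) := hLam.symm
      _ ≤ (c * D + 1) ^ Fintype.card σ := le_trans hcard2 hBcard
      _ ≤ (c * D + 1) ^ (N - 1) :=
          Nat.pow_le_pow_right (Nat.succ_le_succ (Nat.zero_le _)) (by omega)
  have h2 : c * D + 1 ≤ (c * N) * (E + 1) := by
    have : 1 ≤ c * N := Nat.one_le_iff_ne_zero.mpr (by positivity)
    calc c * D + 1 = c * N * E + 1 := by rw [hD]; ring_nf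
      _ ≤ c * N * E + c * N := by omega
      _ = c * N * (E + 1) := by ring
  have h3 : (c * D + 1) ^ (N - 1) ≤ (c * N) ^ (N - 1) * (E + 1) ^ (N - 1) := by
    rw [← Nat.mul_pow]
    exact Nat.pow_le_pow_left h2 _
  have h4 : (c * N) ^ (N - 1) < E + 1 := by
    have h5 : (c * N) ^ (N - 1) ≤ (c * N) ^ N :=
      Nat.pow_le_pow_right (Nat.one_le_iff_ne_zero.mpr (by positivity)) (by omega)
    omega
  have h5 : (E + 1) ^ N = (E + 1) ^ (N - 1) * (E + 1) := by
    rw [← pow_succ]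
    congr 1
    omega
  have h6 : (E + 1) ^ (N - 1) * (E + 1) ≤ (E + 1) ^ (N - 1) * (c * N) ^ (N - 1) := by
    calc (E + 1) ^ (N - 1) * (E + 1) = (E + 1) ^ N := h5.symm
      _ ≤ (c * N) ^ (N - 1) * (E + 1) ^ (N - 1) := le_trans key h3
      _ = (E + 1) ^ (N - 1) * (c * N) ^ (N - 1) := Nat.mul_comm _ _
  have h7 : E + 1 ≤ (c * N) ^ (N - 1) :=
    Nat.le_of_mul_le_mul_left h6 (by positivity)
  omega


/-- Evaluation of a polynomial `Φ` in the coefficients of the tuple `(h, g)`. -/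
def evalCoeffs {n m1 m2 : ℕ}
    (Φ : MvPolynomial ((Fin m1 ⊕ Fin m2) × (Fin n →₀ ℕ)) ℝ)
    (h : Fin m1 → MvPolynomial (Fin n) ℝ) (g : Fin m2 → MvPolynomial (Fin n) ℝ) : ℝ :=
  eval (fun v => coeff v.2 (Sum.elim h g v.1)) Φ

/-- If `m1 + m2 ≥ n + 1`, there is a nonzero polynomial `Φ` in the coefficients
of `(h, g)` such that whenever `Φ(h,g) ≠ 0`: every subset of `n − m1 + 1` of the
`g_j`'s has no common complex zero with `h₁,…,h_{m1}`; in particular, at every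
point of `K` at most `n − m1` of the inequality constraints are active. -/
theorem generic_few_active_constraints
    (n m1 m2 : ℕ) (hm1 : m1 ≤ n) (hm : n + 1 ≤ m1 + m2)
    (d : Fin m1 → ℕ) (d' : Fin m2 → ℕ)
    (hd : ∀ i, 0 < d i) (hd' : ∀ j, 0 < d' j) :
    ∃ Φ : MvPolynomial ((Fin m1 ⊕ Fin m2) × (Fin n →₀ ℕ)) ℝ,
      (∃ (h : Fin m1 → MvPolynomial (Fin n) ℝ) (g : Fin m2 → MvPolynomial (Fin n) ℝ),
        (∀ i, (h i).totalDegree ≤ d i) ∧ (∀ j, (g j).totalDegree ≤ d' j) ∧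
        evalCoeffs Φ h g ≠ 0) ∧
      ∀ (h : Fin m1 → MvPolynomial (Fin n) ℝ) (g : Fin m2 → MvPolynomial (Fin n) ℝ),
        (∀ i, (h i).totalDegree ≤ d i) → (∀ j, (g j).totalDegree ≤ d' j) →
        evalCoeffs Φ h g ≠ 0 →
        (∀ J : Finset (Fin m2), J.card = n - m1 + 1 →
          ¬ ∃ x : Fin n → ℂ,
            (∀ i, aeval x (h i) = 0) ∧ ∀ j ∈ J, aeval x (g j) = 0) ∧
        (∀ u : Fin n → ℝ, (∀ i, eval u (h i) = 0) → (∀ j, 0 ≤ eval u (g j)) →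
          (Finset.univ.filter fun j : Fin m2 => eval u (g j) = 0).card ≤ n - m1) := by
  classical
  set kk := n - m1 + 1 with hkk
  set Dg : Fin m1 ⊕ Fin m2 → ℕ := Sum.elim d d' with hDg
  set M : (Fin m1 ⊕ Fin m2) → Finset (Fin n →₀ ℕ) := fun s =>
    (Finset.Iic (Finsupp.equivFunOnFinite.symm fun _ => Dg s)).filter
      (fun v => (v.sum fun _ e => e) ≤ Dg s) with hMdef
  have hM : ∀ s v, v ∈ M s ↔ (v.sum fun _ e => e) ≤ Dg s := by
    intro s v
    simp only [hMdef, Finset.mem_filter, Finset.mem_Iic]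
    constructor
    · exact fun h => h.2
    · intro h
      refine ⟨?_, h⟩
      rw [Finsupp.le_iff]
      intro i _
      have h1 := aux_le_sum v i
      have h2 : (Finsupp.equivFunOnFinite.symm fun _ => Dg s) i = Dg s := rfl
      omega
  set TF : Finset ((Fin m1 ⊕ Fin m2) × (Fin n →₀ ℕ)) :=
    Finset.univ.biUnion (fun s => (M s).image fun v => (s, v)) with hTFdef
  have hTF : ∀ p, p ∈ TF ↔ (p.2.sum fun _ e => e) ≤ Dg p.1 := by
    intro p
    simp only [hTFdef, Finset.mem_biUnion, Finset.mem_univ, true_and, Finset.mem_image]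
    constructor
    · rintro ⟨s, v, hv, rfl⟩
      exact (hM s v).mp hv
    · intro hp
      exact ⟨p.1, p.2, (hM _ _).mpr hp, rfl⟩
  have hTFmem : ∀ s v, v ∈ M s → (s, v) ∈ TF := fun s v hv => (hTF _).mpr ((hM s v).mp hv)
  clear_value TF
  clear hTFdef
  clear_value M
  clear hMdef
  set χ : (Fin m1 → MvPolynomial (Fin n) ℝ) → (Fin m2 → MvPolynomial (Fin n) ℝ) →
      {p // p ∈ TF} → ℝ := fun h g t => coeff t.1.2 (Sum.elim h g t.1.1) with hχ
  -- the key construction for a fixed index set J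
  have key : ∀ J : Finset (Fin m2), J.card = kk →
      ∃ s0 : MvPolynomial {p // p ∈ TF} ℝ, s0 ≠ 0 ∧
        ∀ h g, (∀ i, (h i).totalDegree ≤ d i) → (∀ j, (g j).totalDegree ≤ d' j) →
        ∀ x : Fin n → ℂ, (∀ i, aeval x (h i) = 0) → (∀ j ∈ J, aeval x (g j) = 0) →
          eval (χ h g) s0 = 0 := by
    intro J hJ
    set ι : (Fin m1 ⊕ {j : Fin m2 // j ∈ J}) → Fin m1 ⊕ Fin m2 :=
      Sum.map id Subtype.val with hι
    have hιinj : Function.Injective ι :=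
      Function.injective_id.sumMap Subtype.val_injective
    have h0TF : ∀ s, (s, (0 : Fin n →₀ ℕ)) ∈ TF := fun s => (hTF _).mpr (by simp)
    set sp : (Fin m1 ⊕ {j : Fin m2 // j ∈ J}) → {p // p ∈ TF} :=
      fun p => ⟨(ι p, 0), h0TF _⟩ with hspdef
    have hspinj : Function.Injective sp := by
      intro a b hab
      exact hιinj (congrArg (fun t => t.1.1) hab)
    have hnotsp : ∀ (s) (v : Fin n →₀ ℕ) (hp : (s, v) ∈ TF), v ≠ 0 →
        (⟨(s, v), hp⟩ : {p // p ∈ TF}) ∉ Set.range sp := by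
      rintro s v hp h0 ⟨p, hpe⟩
      exact h0 (congrArg (fun t => t.1.2) hpe).symm
    set xmon : (Fin n →₀ ℕ) → MvPolynomial ({t : {p // p ∈ TF} // t ∉ Set.range sp} ⊕ Fin n) ℝ :=
      fun v => v.prod fun i e => (X (Sum.inr i)) ^ e with hxmon
    set GG : (Fin m1 ⊕ Fin m2) → MvPolynomial ({t : {p // p ∈ TF} // t ∉ Set.range sp} ⊕ Fin n) ℝ :=
      fun s => ∑ v ∈ ((M s).erase 0).attach,
        X (Sum.inl ⟨⟨(s, v.1), hTFmem s v.1 (Finset.mem_of_mem_erase v.2)⟩,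
          hnotsp s v.1 _ (Finset.ne_of_mem_erase v.2)⟩) * xmon v.1 with hGGdef
    set f : {p // p ∈ TF} → MvPolynomial ({t : {p // p ∈ TF} // t ∉ Set.range sp} ⊕ Fin n) ℝ :=
      fun t => if ht : t ∈ Set.range sp then -GG t.1.1 else X (Sum.inl ⟨t, ht⟩) with hfdef
    have hcardW : Fintype.card ({t : {p // p ∈ TF} // t ∉ Set.range sp} ⊕ Fin n) <
        Fintype.card {p // p ∈ TF} := by
      have h1 : Fintype.card {t : {p // p ∈ TF} // t ∈ Set.range sp} = n + 1 := by
        have e1 : Fintype.card (Fin m1 ⊕ {j : Fin m2 // j ∈ J}) =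
            Fintype.card {t : {p // p ∈ TF} // t ∈ Set.range sp} :=
          Fintype.card_congr (Equiv.ofInjective sp hspinj)
        rw [Fintype.card_sum, Fintype.card_fin, Fintype.card_coe] at e1
        omega
      have h2 : Fintype.card {t : {p // p ∈ TF} // t ∉ Set.range sp}
          = Fintype.card {p // p ∈ TF} - (n + 1) := by
        have h4 := @Fintype.card_subtype_compl {p // p ∈ TF} _ (fun t => t ∈ Set.range sp) _ _
        rw [h1] at h4
        exact h4
      have h3 : n + 1 ≤ Fintype.card {p // p ∈ TF} := by
        rw [← h1]
        exact Fintype.card_le_of_injective (fun t => t.1) Subtype.val_injective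
      rw [Fintype.card_sum, Fintype.card_fin, h2]
      omega
    have hdep := aux_not_algIndep f hcardW
    rw [algebraicIndependent_iff] at hdep
    push_neg at hdep
    obtain ⟨s0, hs0eval, hs0ne⟩ := hdep
    refine ⟨s0, hs0ne, ?_⟩
    intro h g hdh hdg x hx1 hx2
    have hdegq : ∀ s, (Sum.elim h g s).totalDegree ≤ Dg s := by
      rintro (i | j)
      · exact hdh i
      · exact hdg j
    set ev : MvPolynomial ({t : {p // p ∈ TF} // t ∉ Set.range sp} ⊕ Fin n) ℝ →+* ℂ :=
      eval₂Hom (algebraMap ℝ ℂ) (Sum.elim (fun t => ((χ h g t.1 : ℝ) : ℂ)) x) with hev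
    have hq0 : ∀ p : Fin m1 ⊕ {j : Fin m2 // j ∈ J}, aeval x (Sum.elim h g (ι p)) = 0 := by
      rintro (i | ⟨j, hj⟩)
      · exact hx1 i
      · exact hx2 j hj
    have hGGeval : ∀ p, ev (GG (ι p)) = -(algebraMap ℝ ℂ) (χ h g (sp p)) := by
      intro p
      have hsupp : (Sum.elim h g (ι p)).support ⊆ M (ι p) := fun v hv =>
        (hM _ v).mpr (le_trans (le_totalDegree hv) (hdegq (ι p)))
      have hzero : (0 : Fin n →₀ ℕ) ∈ M (ι p) := (hM _ _).mpr (by simp)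
      have haeval : (0 : ℂ) = ∑ v ∈ M (ι p),
          (algebraMap ℝ ℂ) (coeff v (Sum.elim h g (ι p))) * ∏ i ∈ v.support, x i ^ v i := by
        rw [← hq0 p, aeval_def, eval₂_eq]
        refine Finset.sum_subset hsupp fun v _ hv => ?_
        rw [MvPolynomial.notMem_support_iff.mp hv, map_zero, zero_mul]
      have hsplit := Finset.add_sum_erase (M (ι p))
        (fun v => (algebraMap ℝ ℂ) (coeff v (Sum.elim h g (ι p))) * ∏ i ∈ v.support, x i ^ v i)
        hzero
      have h00 : (algebraMap ℝ ℂ) (coeff 0 (Sum.elim h g (ι p))) *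
          ∏ i ∈ (0 : Fin n →₀ ℕ).support, x i ^ (0 : Fin n →₀ ℕ) i
          = (algebraMap ℝ ℂ) (coeff 0 (Sum.elim h g (ι p))) := by
        simp
      rw [h00] at hsplit
      have hGG2 : ev (GG (ι p)) = ∑ v ∈ (M (ι p)).erase 0,
          (algebraMap ℝ ℂ) (coeff v (Sum.elim h g (ι p))) * ∏ i ∈ v.support, x i ^ v i := by
        rw [hGGdef]
        rw [map_sum]
        rw [← Finset.sum_attach ((M (ι p)).erase 0)
          (fun v => (algebraMap ℝ ℂ) (coeff v (Sum.elim h g (ι p))) * ∏ i ∈ v.support, x i ^ v i)]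
        refine Finset.sum_congr rfl fun v _ => ?_
        rw [map_mul]
        congr 1
        · exact eval₂Hom_X' _ _ _
        · rw [hxmon]
          show ev (∏ i ∈ (v.1).support, (X (Sum.inr i)) ^ (v.1 i)) = _
          rw [map_prod]
          refine Finset.prod_congr rfl fun i _ => ?_
          rw [map_pow]
          congr 1
          exact eval₂Hom_X' _ _ _
      have hχ0 : χ h g (sp p) = coeff 0 (Sum.elim h g (ι p)) := rfl
      rw [hGG2, hχ0]
      linear_combination hsplit - haeval
    have hAB : ((algebraMap ℝ ℂ).comp
          (eval (χ h g) : MvPolynomial {p // p ∈ TF} ℝ →+* ℝ)) =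
        ev.comp ((aeval f : MvPolynomial {p // p ∈ TF} ℝ →ₐ[ℝ] _) : _ →+* _) := by
      apply MvPolynomial.ringHom_ext
      · intro r
        simp [hev]
      · intro t
        simp only [RingHom.comp_apply, RingHom.coe_coe, AlgHom.coe_toRingHom, eval_X, aeval_X,
          RingHom.coe_comp, Function.comp_apply]
        by_cases ht : t ∈ Set.range sp
        · obtain ⟨p, rfl⟩ := ht
          have hf : f (sp p) = -GG (ι p) := by
            rw [hfdef]
            exact dif_pos ⟨p, rfl⟩
          rw [hf, map_neg, hGGeval p, neg_neg]
        · have hf : f t = X (Sum.inl ⟨t, ht⟩) := by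
            rw [hfdef]
            exact dif_neg ht
          rw [hf]
          have := eval₂Hom_X' (algebraMap ℝ ℂ)
            (Sum.elim (fun t : {t : {p // p ∈ TF} // t ∉ Set.range sp} =>
              ((χ h g t.1 : ℝ) : ℂ)) x) (Sum.inl ⟨t, ht⟩)
          rw [hev, this]
          rfl
    have hfin := RingHom.congr_fun hAB s0
    simp only [RingHom.comp_apply, RingHom.coe_coe, AlgHom.coe_toRingHom] at hfin
    rw [hs0eval, map_zero] at hfin
    exact (map_eq_zero_iff (algebraMap ℝ ℂ) (algebraMap ℝ ℂ).injective).mp hfin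

  -- choose the per-J polynomials
  have key2 : ∀ J : Finset (Fin m2), ∃ s0 : MvPolynomial {p // p ∈ TF} ℝ, s0 ≠ 0 ∧
      (J.card = kk → ∀ h g, (∀ i, (h i).totalDegree ≤ d i) → (∀ j, (g j).totalDegree ≤ d' j) →
        ∀ x : Fin n → ℂ, (∀ i, aeval x (h i) = 0) → (∀ j ∈ J, aeval x (g j) = 0) →
          eval (χ h g) s0 = 0) := by
    intro J
    by_cases hJ : J.card = kk
    · obtain ⟨s0, h1, h2⟩ := key J hJ
      exact ⟨s0, h1, fun _ => h2⟩
    · exact ⟨1, one_ne_zero, fun hc => absurd hc hJ⟩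
  choose sfun hs1 hs2 using key2
  set Js := Finset.powersetCard kk (Finset.univ : Finset (Fin m2)) with hJs
  have hEval : ∀ h g, evalCoeffs (rename Subtype.val (∏ J ∈ Js, sfun J)) h g
      = eval (χ h g) (∏ J ∈ Js, sfun J) := by
    intro h g
    show eval _ (rename Subtype.val (∏ J ∈ Js, sfun J)) = _
    rw [eval_rename]
    rfl
  refine ⟨rename Subtype.val (∏ J ∈ Js, sfun J), ?_, ?_⟩
  · -- existence of a witness tuple
    have hne : (∏ J ∈ Js, sfun J) ≠ 0 := Finset.prod_ne_zero_iff.mpr fun J _ => hs1 J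
    have hx : ∃ χ0 : {p // p ∈ TF} → ℝ, eval χ0 (∏ J ∈ Js, sfun J) ≠ 0 := by
      by_contra hc
      push_neg at hc
      exact hne (MvPolynomial.funext fun y => by rw [hc y, map_zero])
    obtain ⟨χ0, hχ0⟩ := hx
    refine ⟨fun i => ∑ v ∈ (M (Sum.inl i)).attach,
              monomial v.1 (χ0 ⟨(Sum.inl i, v.1), hTFmem _ _ v.2⟩),
            fun j => ∑ v ∈ (M (Sum.inr j)).attach,
              monomial v.1 (χ0 ⟨(Sum.inr j, v.1), hTFmem _ _ v.2⟩), ?_, ?_, ?_⟩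
    · intro i
      refine le_trans (totalDegree_finset_sum _ _) ?_
      refine Finset.sup_le fun v _ => le_trans (totalDegree_monomial_le _ _) ?_
      exact (hM _ _).mp v.2
    · intro j
      refine le_trans (totalDegree_finset_sum _ _) ?_
      refine Finset.sup_le fun v _ => le_trans (totalDegree_monomial_le _ _) ?_
      exact (hM _ _).mp v.2
    · rw [hEval]
      have hagree : (χ (fun i => ∑ v ∈ (M (Sum.inl i)).attach,
              monomial v.1 (χ0 ⟨(Sum.inl i, v.1), hTFmem _ _ v.2⟩))
            (fun j => ∑ v ∈ (M (Sum.inr j)).attach,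
              monomial v.1 (χ0 ⟨(Sum.inr j, v.1), hTFmem _ _ v.2⟩))) = χ0 := by
        funext t
        obtain ⟨⟨s, v⟩, hp⟩ := t
        have hvM : v ∈ M s := (hM s v).mpr ((hTF _).mp hp)
        cases s with
        | inl i =>
            show coeff v (∑ w ∈ (M (Sum.inl i)).attach,
              monomial w.1 (χ0 ⟨(Sum.inl i, w.1), hTFmem _ _ w.2⟩)) = _
            rw [aux_coeff_attach_sum (M (Sum.inl i))
              (fun w => χ0 ⟨(Sum.inl i, w.1), hTFmem _ _ w.2⟩) v hvM]
        | inr j =>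
            show coeff v (∑ w ∈ (M (Sum.inr j)).attach,
              monomial w.1 (χ0 ⟨(Sum.inr j, w.1), hTFmem _ _ w.2⟩)) = _
            rw [aux_coeff_attach_sum (M (Sum.inr j))
              (fun w => χ0 ⟨(Sum.inr j, w.1), hTFmem _ _ w.2⟩) v hvM]
      rw [hagree]
      exact hχ0
  · -- the main genericity conclusion
    intro h g hdh hdg hne0
    have hvanish : ∀ J : Finset (Fin m2), J.card = n - m1 + 1 →
        ¬ ∃ x : Fin n → ℂ, (∀ i, aeval x (h i) = 0) ∧ ∀ j ∈ J, aeval x (g j) = 0 := by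
      rintro J hJ ⟨x, hx1, hx2⟩
      have h0 := hs2 J hJ h g hdh hdg x hx1 hx2
      rw [hEval, map_prod] at hne0
      have hJmem : J ∈ Js := Finset.mem_powersetCard.mpr ⟨Finset.subset_univ _, hJ⟩
      exact hne0 (Finset.prod_eq_zero hJmem h0)
    refine ⟨hvanish, ?_⟩
    intro u hu hgpos
    by_contra hcard
    push_neg at hcard
    obtain ⟨J, hJsub, hJcard⟩ :=
      Finset.exists_subset_card_eq
        (show n - m1 + 1 ≤ (Finset.univ.filter fun j : Fin m2 => eval u (g j) = 0).card by omega)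
    refine hvanish J hJcard ⟨fun i => (u i : ℂ), fun i => ?_, fun j hj => ?_⟩
    · rw [aux_aeval_real, hu i, Complex.ofReal_zero]
    · have hj0 := (Finset.mem_filter.mp (hJsub hj)).2
      rw [aux_aeval_real, hj0, Complex.ofReal_zero]
end
end

section
/- Let g₁ = x₁² − x₂² − (x₁² + x₂²)² and g₂ = x₁ in ℝ[x₁, x₂], and let K = {x ∈ ℝ² : g₁(x) ≥ 0, g₂(x) ≥ 0}. Then: (i) 3x₁ + 2x₂ ≥ 0 for every x ∈ K, with equality only at the origin, so the origin is the unique global minimizer of 3x₁ + 2x₂ on K with minimum value 0; (ii) 3x₁ + 2x₂ does not belong to the quadratic module Q(g) = {σ₀ + σ₁ g₁ + σ₂ g₂ : σ₀, σ₁, σ₂ SOS}; in particular, the first order optimality condition fails at the origin. -/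
open MvPolynomial

noncomputable section

/-- A polynomial is a sum of squares (SOS). -/
def IsSOS {n : ℕ} (p : MvPolynomial (Fin n) ℝ) : Prop :=
  ∃ (k : ℕ) (q : Fin k → MvPolynomial (Fin n) ℝ), p = ∑ i, q i ^ 2

/-- For `g₁ = x₁² − x₂² − (x₁² + x₂²)²`, `g₂ = x₁` and
`K = {x ∈ ℝ² : g₁(x) ≥ 0, g₂(x) ≥ 0}`:
(i) `3x₁ + 2x₂ ≥ 0` on `K` with equality exactly at the origin;
(ii) `3x₁ + 2x₂ ∉ Q(g) = {σ₀ + σ₁g₁ + σ₂g₂ : σᵢ SOS}`;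
in particular, the first order optimality condition fails at the origin. -/
theorem example_cqc_fails (g1 g2 f : MvPolynomial (Fin 2) ℝ)
    (hg1 : g1 = X 0 ^ 2 - X 1 ^ 2 - (X 0 ^ 2 + X 1 ^ 2) ^ 2)
    (hg2 : g2 = X 0)
    (hf : f = C 3 * X 0 + C 2 * X 1)
    (K : Set (Fin 2 → ℝ))
    (hK : K = {x | 0 ≤ eval x g1 ∧ 0 ≤ eval x g2}) :
    (∀ x ∈ K, 0 ≤ eval x f) ∧
    (∀ x ∈ K, eval x f = 0 → x = 0) ∧
    (0 : Fin 2 → ℝ) ∈ K ∧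
    (¬ ∃ σ0 σ1 σ2 : MvPolynomial (Fin 2) ℝ,
        IsSOS σ0 ∧ IsSOS σ1 ∧ IsSOS σ2 ∧ f = σ0 + σ1 * g1 + σ2 * g2) ∧
    (¬ ∃ μ1 μ2 : ℝ, 0 ≤ μ1 ∧ 0 ≤ μ2 ∧
        μ1 * eval (0 : Fin 2 → ℝ) g1 = 0 ∧ μ2 * eval (0 : Fin 2 → ℝ) g2 = 0 ∧
        ∀ k : Fin 2, eval (0 : Fin 2 → ℝ) (pderiv k f)
          = μ1 * eval (0 : Fin 2 → ℝ) (pderiv k g1)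
            + μ2 * eval (0 : Fin 2 → ℝ) (pderiv k g2)) := by
  subst hg1 hg2 hf hK
  refine ⟨?_, ?_, ?_, ?_, ?_⟩
  · intro x hx
    obtain ⟨h1, h2⟩ := hx
    simp at h1 h2 ⊢
    nlinarith [sq_nonneg (x 0 + x 1), sq_nonneg (x 0 - x 1), sq_nonneg (x 0 ^ 2 + x 1 ^ 2)]
  · intro x hx hfx
    obtain ⟨h1, h2⟩ := hx
    simp at h1 h2 hfx
    have h0 : x 0 = 0 := by nlinarith [sq_nonneg (x 0 ^ 2 + x 1 ^ 2)]
    have h1' : x 1 = 0 := by nlinarith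
    funext i
    fin_cases i <;> simp [h0, h1']
  · constructor <;> simp
  · rintro ⟨σ0, σ1, σ2, ⟨k, q, hq⟩, _, _, heq⟩
    have h0 : constantCoeff σ0 = 0 := by
      have := congrArg (eval (0 : Fin 2 → ℝ)) heq
      simp at this
      linarith
    have hq0 : ∀ i, constantCoeff (q i) = 0 := by
      have hsum : ∑ i, (constantCoeff (q i)) ^ 2 = 0 := by
        rw [hq] at h0
        simpa using h0
      intro i
      have := (Finset.sum_eq_zero_iff_of_nonneg (fun i _ => sq_nonneg _)).mp hsum i
        (Finset.mem_univ i)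
      exact pow_eq_zero_iff (by norm_num) |>.mp this
    have key := congrArg (fun p => eval (0 : Fin 2 → ℝ) (pderiv 1 p)) heq
    simp only [hq, map_add, map_sum, pderiv_mul, pow_two, map_mul, map_sub] at key
    simp [pderiv_X, hq0] at key
  · rintro ⟨μ1, μ2, _, _, _, _, h5⟩
    have := h5 1
    simp [pderiv_mul, pderiv_X] at this
end
end

section
/- For every γ ∈ ℝ, the polynomial x₁²x₂²(x₁² + x₂² − 3x₃²) + x₃⁶ + x₁² + x₂² + x₃² − γ (the Motzkin polynomial plus the quadratic form x₁² + x₂² + x₃², minus γ) is not a sum of squares of polynomials in ℝ[x₁, x₂, x₃]. -/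
open MvPolynomial

noncomputable section

namespace MotzkinNotSOS

open Finset

def E (v : ℕ × ℕ × ℕ) : Fin 3 →₀ ℕ :=
  Finsupp.single 0 v.1 + Finsupp.single 1 v.2.1 + Finsupp.single 2 v.2.2

lemma E_apply (v : ℕ × ℕ × ℕ) : E v 0 = v.1 ∧ E v 1 = v.2.1 ∧ E v 2 = v.2.2 := by
  refine ⟨?_, ?_, ?_⟩ <;> simp [E, Finsupp.single_apply]

lemma eq_E (m : Fin 3 →₀ ℕ) : m = E (m 0, m 1, m 2) := by
  ext i; fin_cases i <;> simp [E, Finsupp.single_apply]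

lemma E_inj : Function.Injective E := by
  intro v w h
  have h0 := congrArg (fun f : Fin 3 →₀ ℕ => f 0) h
  have h1 := congrArg (fun f : Fin 3 →₀ ℕ => f 1) h
  have h2 := congrArg (fun f : Fin 3 →₀ ℕ => f 2) h
  simp only [(E_apply v).1, (E_apply v).2.1, (E_apply v).2.2,
    (E_apply w).1, (E_apply w).2.1, (E_apply w).2.2] at h0 h1 h2
  exact Prod.ext h0 (Prod.ext h1 h2)

lemma E_add (v w : ℕ × ℕ × ℕ) : E v + E w = E (v + w) := by
  simp only [E, Prod.fst_add, Prod.snd_add, Finsupp.single_add]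
  abel

lemma degree3 (m : Fin 3 →₀ ℕ) : m.degree = m 0 + m 1 + m 2 := by
  rw [Finsupp.degree_apply, Finset.sum_subset (Finset.subset_univ _)
    (by simp [Finsupp.notMem_support_iff])]
  exact Fin.sum_univ_three m

lemma degree_add3 (a b : Fin 3 →₀ ℕ) : (a + b).degree = a.degree + b.degree := by
  simp only [degree3, Finsupp.add_apply]; ring

lemma degree_E (v : ℕ × ℕ × ℕ) : (E v).degree = v.1 + v.2.1 + v.2.2 := by
  rw [degree3, (E_apply v).1, (E_apply v).2.1, (E_apply v).2.2]

lemma sum_eq_degree (m : Fin 3 →₀ ℕ) : (m.sum fun _ e => e) = m.degree := by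
  rw [Finsupp.degree]; rfl

lemma coeff_zero_of_lt {q : MvPolynomial (Fin 3) ℝ} {m : Fin 3 →₀ ℕ}
    (h : q.totalDegree < m.degree) : coeff m q = 0 :=
  coeff_eq_zero_of_totalDegree_lt h

lemma sumsq {k : ℕ} {a : Fin k → ℝ} (h : ∑ i, (a i)^2 = 0) (i : Fin k) : a i = 0 := by
  have := (Finset.sum_eq_zero_iff_of_nonneg (fun j _ => sq_nonneg (a j))).mp h i (mem_univ i)
  exact pow_eq_zero_iff two_ne_zero |>.mp this

lemma sq_sum_poly_zero {k : ℕ} {q : Fin k → MvPolynomial (Fin 3) ℝ}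
    (h : ∑ i, q i ^ 2 = 0) (i : Fin k) : q i = 0 := by
  apply MvPolynomial.funext
  intro x
  have hx := congrArg (eval x) h
  simp only [map_sum, map_pow, map_zero] at hx
  simpa using sumsq hx i

lemma comp_two_mul {d : ℕ} {a : MvPolynomial (Fin 3) ℝ} (ha : a.totalDegree ≤ d) :
    homogeneousComponent (2*d) (a^2) = (homogeneousComponent d a)^2 := by
  rw [sq, sq]
  ext m
  rw [coeff_homogeneousComponent, coeff_mul, coeff_mul]
  by_cases hm : m.degree = 2*d
  · rw [if_pos hm]
    apply Finset.sum_congr rfl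
    intro x hx
    rw [Finset.HasAntidiagonal.mem_antidiagonal] at hx
    have hdeg : x.1.degree + x.2.degree = 2*d := by rw [← hm, ← hx, degree_add3]
    rcases lt_trichotomy x.1.degree d with h1 | h1 | h1
    · have h2 : d < x.2.degree := by omega
      rw [coeff_homogeneousComponent, coeff_homogeneousComponent,
        coeff_zero_of_lt (lt_of_le_of_lt ha h2)]
      simp
    · have h2 : x.2.degree = d := by omega
      rw [coeff_homogeneousComponent, coeff_homogeneousComponent, if_pos h1, if_pos h2]
    · rw [coeff_homogeneousComponent, coeff_homogeneousComponent,
        coeff_zero_of_lt (lt_of_le_of_lt ha h1), if_neg (by omega)]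
      simp
  · rw [if_neg hm]
    symm
    apply Finset.sum_eq_zero
    intro x hx
    rw [Finset.HasAntidiagonal.mem_antidiagonal] at hx
    rw [coeff_homogeneousComponent, coeff_homogeneousComponent]
    by_cases h1 : x.1.degree = d
    · by_cases h2 : x.2.degree = d
      · exfalso; apply hm; rw [← hx, degree_add3, h1, h2]; ring
      · rw [if_neg h2]; simp
    · rw [if_neg h1]; simp

lemma deg_le {k : ℕ} {q : Fin k → MvPolynomial (Fin 3) ℝ} {p : MvPolynomial (Fin 3) ℝ}
    (hp6 : p.totalDegree ≤ 6) (hp : p = ∑ i, q i ^ 2) (i : Fin k) :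
    (q i).totalDegree ≤ 3 := by
  by_contra hbig
  push_neg at hbig
  set d := Finset.univ.sup (fun j => (q j).totalDegree) with hd
  have hd4 : 4 ≤ d :=
    le_trans hbig (Finset.le_sup (f := fun j => (q j).totalDegree) (mem_univ i))
  have h0 : homogeneousComponent (2*d) p = 0 :=
    homogeneousComponent_eq_zero (2*d) p (by omega)
  rw [hp, map_sum] at h0
  have hcomp : ∀ j, homogeneousComponent (2*d) (q j ^ 2) = (homogeneousComponent d (q j))^2 :=
    fun j => comp_two_mul (Finset.le_sup (f := fun j => (q j).totalDegree) (mem_univ j))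
  simp only [hcomp] at h0
  obtain ⟨j, -, hj⟩ := Finset.exists_mem_eq_sup univ ⟨i, mem_univ i⟩ (fun j => (q j).totalDegree)
  have hqj : q j ≠ 0 := by
    intro h
    rw [h, totalDegree_zero] at hj
    omega
  have hzero := sq_sum_poly_zero h0 j
  obtain ⟨m, hm, hms⟩ := (q j).support.exists_mem_eq_sup (support_nonempty.mpr hqj)
    (fun s => s.sum fun _ e => e)
  have hmd : m.degree = d := by
    rw [hd, hj, totalDegree, hms, Finsupp.degree_apply, Finsupp.sum]
  have : coeff m (homogeneousComponent d (q j)) = coeff m (q j) := by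
    rw [coeff_homogeneousComponent, if_pos hmd]
  rw [hzero, coeff_zero] at this
  exact (mem_support_iff.mp hm) this.symm

def T : Finset (ℕ × ℕ × ℕ) :=
  (Finset.range 4 ×ˢ Finset.range 4 ×ˢ Finset.range 4).filter fun v => v.1 + v.2.1 + v.2.2 ≤ 3

lemma T_eq : T = {(0,0,0),(0,0,1),(0,0,2),(0,0,3),(0,1,0),(0,1,1),(0,1,2),(0,2,0),(0,2,1),(0,3,0),(1,0,0),(1,0,1),(1,0,2),(1,1,0),(1,1,1),(1,2,0),(2,0,0),(2,0,1),(2,1,0),(3,0,0)} := by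
  decide

lemma rep {q : MvPolynomial (Fin 3) ℝ} (hq : q.totalDegree ≤ 3) :
    q = ∑ v ∈ T, monomial (E v) (coeff (E v) q) := by
  ext m
  rw [coeff_sum]
  simp only [coeff_monomial]
  by_cases h : m 0 + m 1 + m 2 ≤ 3
  · have hmem : (m 0, m 1, m 2) ∈ T := by
      simp only [T, Finset.mem_filter, Finset.mem_product, Finset.mem_range]
      omega
    conv_lhs => rw [eq_E m]
    calc coeff (E (m 0, m 1, m 2)) q
        = if (m 0, m 1, m 2) ∈ T then coeff (E (m 0, m 1, m 2)) q else 0 := by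
          rw [if_pos hmem]
      _ = ∑ v ∈ T, if v = (m 0, m 1, m 2) then coeff (E v) q else 0 := by
          rw [Finset.sum_ite_eq' T _ (fun v => coeff (E v) q)]
      _ = ∑ v ∈ T, if E v = m then coeff (E v) q else 0 := by
          apply Finset.sum_congr rfl
          intro v _
          congr 1
          simp only [eq_iff_iff]
          constructor
          · intro hv; rw [hv, ← eq_E]
          · intro hv; apply E_inj; rw [hv, ← eq_E]
  · rw [coeff_zero_of_lt (lt_of_le_of_lt hq (by rw [degree3]; omega))]
    symm
    apply Finset.sum_eq_zero
    intro v hv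
    rw [if_neg]
    intro hEv
    simp only [T, Finset.mem_filter] at hv
    have := degree_E v
    rw [hEv, degree3] at this
    omega

lemma key {q : MvPolynomial (Fin 3) ℝ} (hq : q.totalDegree ≤ 3) (u : ℕ × ℕ × ℕ) :
    coeff (E u) (q^2) =
      ∑ v ∈ T, ∑ w ∈ T, if v + w = u then coeff (E v) q * coeff (E w) q else 0 := by
  conv_lhs => rw [rep hq]
  rw [sq, Finset.sum_mul_sum, coeff_sum]
  simp only [coeff_sum, monomial_mul, coeff_monomial, E_add, E_inj.eq_iff]


set_option maxHeartbeats 1000000 in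
lemma ev600 (c : ℕ × ℕ × ℕ → ℝ) :
    ∑ v ∈ T, ∑ w ∈ T, (if v + w = ((6:ℕ),(0:ℕ),(0:ℕ)) then c v * c w else 0)
      = c (3,0,0) * c (3,0,0) := by
  rw [T_eq]
  simp (config := { decide := true }) only [Finset.sum_insert, Finset.mem_insert,
    Finset.sum_singleton, Finset.mem_singleton, Prod.mk.injEq, Prod.mk_add_mk]
  norm_num
  try ring

set_option maxHeartbeats 1000000 in
lemma ev060 (c : ℕ × ℕ × ℕ → ℝ) :
    ∑ v ∈ T, ∑ w ∈ T, (if v + w = ((0:ℕ),(6:ℕ),(0:ℕ)) then c v * c w else 0)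
      = c (0,3,0) * c (0,3,0) := by
  rw [T_eq]
  simp (config := { decide := true }) only [Finset.sum_insert, Finset.mem_insert,
    Finset.sum_singleton, Finset.mem_singleton, Prod.mk.injEq, Prod.mk_add_mk]
  norm_num
  try ring

set_option maxHeartbeats 1000000 in
lemma ev402 (c : ℕ × ℕ × ℕ → ℝ) :
    ∑ v ∈ T, ∑ w ∈ T, (if v + w = ((4:ℕ),(0:ℕ),(2:ℕ)) then c v * c w else 0)
      = c (1,0,2) * c (3,0,0) + c (2,0,1) * c (2,0,1) + c (3,0,0) * c (1,0,2) := by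
  rw [T_eq]
  simp (config := { decide := true }) only [Finset.sum_insert, Finset.mem_insert,
    Finset.sum_singleton, Finset.mem_singleton, Prod.mk.injEq, Prod.mk_add_mk]
  norm_num
  try ring

set_option maxHeartbeats 1000000 in
lemma ev042 (c : ℕ × ℕ × ℕ → ℝ) :
    ∑ v ∈ T, ∑ w ∈ T, (if v + w = ((0:ℕ),(4:ℕ),(2:ℕ)) then c v * c w else 0)
      = c (0,1,2) * c (0,3,0) + c (0,2,1) * c (0,2,1) + c (0,3,0) * c (0,1,2) := by
  rw [T_eq]
  simp (config := { decide := true }) only [Finset.sum_insert, Finset.mem_insert,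
    Finset.sum_singleton, Finset.mem_singleton, Prod.mk.injEq, Prod.mk_add_mk]
  norm_num
  try ring

set_option maxHeartbeats 1000000 in
lemma ev204 (c : ℕ × ℕ × ℕ → ℝ) :
    ∑ v ∈ T, ∑ w ∈ T, (if v + w = ((2:ℕ),(0:ℕ),(4:ℕ)) then c v * c w else 0)
      = c (0,0,3) * c (2,0,1) + c (1,0,2) * c (1,0,2) + c (2,0,1) * c (0,0,3) := by
  rw [T_eq]
  simp (config := { decide := true }) only [Finset.sum_insert, Finset.mem_insert,
    Finset.sum_singleton, Finset.mem_singleton, Prod.mk.injEq, Prod.mk_add_mk]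
  norm_num
  try ring

set_option maxHeartbeats 1000000 in
lemma ev024 (c : ℕ × ℕ × ℕ → ℝ) :
    ∑ v ∈ T, ∑ w ∈ T, (if v + w = ((0:ℕ),(2:ℕ),(4:ℕ)) then c v * c w else 0)
      = c (0,0,3) * c (0,2,1) + c (0,1,2) * c (0,1,2) + c (0,2,1) * c (0,0,3) := by
  rw [T_eq]
  simp (config := { decide := true }) only [Finset.sum_insert, Finset.mem_insert,
    Finset.sum_singleton, Finset.mem_singleton, Prod.mk.injEq, Prod.mk_add_mk]
  norm_num
  try ring

set_option maxHeartbeats 1000000 in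
lemma ev222 (c : ℕ × ℕ × ℕ → ℝ) :
    ∑ v ∈ T, ∑ w ∈ T, (if v + w = ((2:ℕ),(2:ℕ),(2:ℕ)) then c v * c w else 0)
      = c (0,1,2) * c (2,1,0) + c (0,2,1) * c (2,0,1) + c (1,0,2) * c (1,2,0) + c (1,1,1) * c (1,1,1) + c (1,2,0) * c (1,0,2) + c (2,0,1) * c (0,2,1) + c (2,1,0) * c (0,1,2) := by
  rw [T_eq]
  simp (config := { decide := true }) only [Finset.sum_insert, Finset.mem_insert,
    Finset.sum_singleton, Finset.mem_singleton, Prod.mk.injEq, Prod.mk_add_mk]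
  norm_num
  try ring

lemma mono_eq (a b c : ℕ) (r : ℝ) :
    (monomial (E (a,b,c)) r : MvPolynomial (Fin 3) ℝ) = C r * X 0^a * X 1^b * X 2^c := by
  rw [X_pow_eq_monomial, X_pow_eq_monomial, X_pow_eq_monomial, C_apply]
  simp only [monomial_mul, E, mul_one]
  rw [zero_add]

end MotzkinNotSOS

open MotzkinNotSOS

/-- For every `γ ∈ ℝ`, the Motzkin polynomial plus `x₁² + x₂² + x₃²` minus `γ`
is not a sum of squares of polynomials. -/
theorem motzkin_plus_quadratic_shift_not_sos (γ : ℝ) :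
    ¬ IsSOS ((X 0 ^ 2 * X 1 ^ 2 * (X 0 ^ 2 + X 1 ^ 2 - C 3 * X 2 ^ 2) + X 2 ^ 6
        + X 0 ^ 2 + X 1 ^ 2 + X 2 ^ 2 - C γ : MvPolynomial (Fin 3) ℝ)) := by
  rintro ⟨k, q, hp⟩
  have hrep : (X 0 ^ 2 * X 1 ^ 2 * (X 0 ^ 2 + X 1 ^ 2 - C 3 * X 2 ^ 2) + X 2 ^ 6
        + X 0 ^ 2 + X 1 ^ 2 + X 2 ^ 2 - C γ : MvPolynomial (Fin 3) ℝ) =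
      monomial (E (4,2,0)) 1 + monomial (E (2,4,0)) 1 + monomial (E (2,2,2)) (-3)
        + monomial (E (0,0,6)) 1 + monomial (E (2,0,0)) 1 + monomial (E (0,2,0)) 1
        + monomial (E (0,0,2)) 1 + monomial (E (0,0,0)) (-γ) := by
    simp only [mono_eq, C_neg, C_1]
    ring
  have hp6 : (X 0 ^ 2 * X 1 ^ 2 * (X 0 ^ 2 + X 1 ^ 2 - C 3 * X 2 ^ 2) + X 2 ^ 6
        + X 0 ^ 2 + X 1 ^ 2 + X 2 ^ 2 - C γ : MvPolynomial (Fin 3) ℝ).totalDegree ≤ 6 := by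
    rw [hrep]
    have hm : ∀ (v : ℕ × ℕ × ℕ) (r : ℝ), v.1 + v.2.1 + v.2.2 ≤ 6 →
        (monomial (E v) r : MvPolynomial (Fin 3) ℝ).totalDegree ≤ 6 := by
      intro v r h
      refine le_trans (totalDegree_monomial_le _ _) ?_
      have he : ((E v).sum fun _ => id) = (E v).degree := by
        rw [Finsupp.degree, Finsupp.sum]; rfl
      rw [he, degree_E]
      exact h
    refine le_trans (totalDegree_add _ _) (max_le (le_trans (totalDegree_add _ _)
      (max_le (le_trans (totalDegree_add _ _) (max_le (le_trans (totalDegree_add _ _)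
      (max_le (le_trans (totalDegree_add _ _) (max_le (le_trans (totalDegree_add _ _)
      (max_le (le_trans (totalDegree_add _ _) (max_le ?_ ?_)) ?_)) ?_)) ?_)) ?_)) ?_)) ?_) <;>
      apply hm <;> norm_num
  have hdeg : ∀ i, (q i).totalDegree ≤ 3 := deg_le hp6 hp
  set c : Fin k → ℕ × ℕ × ℕ → ℝ := fun i v => coeff (E v) (q i) with hc
  have hcoeff : ∀ u : ℕ × ℕ × ℕ,
      coeff (E u) (monomial (E (4,2,0)) 1 + monomial (E (2,4,0)) 1 + monomial (E (2,2,2)) (-3)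
        + monomial (E (0,0,6)) 1 + monomial (E (2,0,0)) 1 + monomial (E (0,2,0)) 1
        + monomial (E (0,0,2)) 1 + monomial (E (0,0,0)) (-γ) : MvPolynomial (Fin 3) ℝ)
      = ∑ i, ∑ v ∈ T, ∑ w ∈ T, (if v + w = u then c i v * c i w else 0) := by
    intro u
    rw [← hrep, hp, coeff_sum]
    exact Finset.sum_congr rfl (fun i _ => key (hdeg i) u)
  have e600 : (0:ℝ) = ∑ i, c i (3,0,0) * c i (3,0,0) := by
    have h := hcoeff (6,0,0)
    rw [Finset.sum_congr rfl (fun i _ => ev600 (c i))] at h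
    rw [← h]
    simp only [coeff_add, coeff_monomial, E_inj.eq_iff, Prod.mk.injEq]
    norm_num
  have e060 : (0:ℝ) = ∑ i, c i (0,3,0) * c i (0,3,0) := by
    have h := hcoeff (0,6,0)
    rw [Finset.sum_congr rfl (fun i _ => ev060 (c i))] at h
    rw [← h]
    simp only [coeff_add, coeff_monomial, E_inj.eq_iff, Prod.mk.injEq]
    norm_num
  have e402 : (0:ℝ) = ∑ i, (c i (1,0,2) * c i (3,0,0) + c i (2,0,1) * c i (2,0,1)
      + c i (3,0,0) * c i (1,0,2)) := by
    have h := hcoeff (4,0,2)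
    rw [Finset.sum_congr rfl (fun i _ => ev402 (c i))] at h
    rw [← h]
    simp only [coeff_add, coeff_monomial, E_inj.eq_iff, Prod.mk.injEq]
    norm_num
  have e042 : (0:ℝ) = ∑ i, (c i (0,1,2) * c i (0,3,0) + c i (0,2,1) * c i (0,2,1)
      + c i (0,3,0) * c i (0,1,2)) := by
    have h := hcoeff (0,4,2)
    rw [Finset.sum_congr rfl (fun i _ => ev042 (c i))] at h
    rw [← h]
    simp only [coeff_add, coeff_monomial, E_inj.eq_iff, Prod.mk.injEq]
    norm_num
  have e204 : (0:ℝ) = ∑ i, (c i (0,0,3) * c i (2,0,1) + c i (1,0,2) * c i (1,0,2)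
      + c i (2,0,1) * c i (0,0,3)) := by
    have h := hcoeff (2,0,4)
    rw [Finset.sum_congr rfl (fun i _ => ev204 (c i))] at h
    rw [← h]
    simp only [coeff_add, coeff_monomial, E_inj.eq_iff, Prod.mk.injEq]
    norm_num
  have e024 : (0:ℝ) = ∑ i, (c i (0,0,3) * c i (0,2,1) + c i (0,1,2) * c i (0,1,2)
      + c i (0,2,1) * c i (0,0,3)) := by
    have h := hcoeff (0,2,4)
    rw [Finset.sum_congr rfl (fun i _ => ev024 (c i))] at h
    rw [← h]
    simp only [coeff_add, coeff_monomial, E_inj.eq_iff, Prod.mk.injEq]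
    norm_num
  have e222 : (-3:ℝ) = ∑ i, (c i (0,1,2) * c i (2,1,0) + c i (0,2,1) * c i (2,0,1)
      + c i (1,0,2) * c i (1,2,0) + c i (1,1,1) * c i (1,1,1) + c i (1,2,0) * c i (1,0,2)
      + c i (2,0,1) * c i (0,2,1) + c i (2,1,0) * c i (0,1,2)) := by
    have h := hcoeff (2,2,2)
    rw [Finset.sum_congr rfl (fun i _ => ev222 (c i))] at h
    rw [← h]
    simp only [coeff_add, coeff_monomial, E_inj.eq_iff, Prod.mk.injEq]
    norm_num
  have hA : ∀ i, c i (3,0,0) = 0 := fun i => sumsq (by simpa [pow_two] using e600.symm) i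
  have hB : ∀ i, c i (0,3,0) = 0 := fun i => sumsq (by simpa [pow_two] using e060.symm) i
  have hC : ∀ i, c i (2,0,1) = 0 := by
    refine fun i => sumsq (a := fun i => c i (2,0,1)) ?_ i
    calc ∑ i, (c i (2,0,1))^2
        = ∑ i, (c i (1,0,2) * c i (3,0,0) + c i (2,0,1) * c i (2,0,1)
            + c i (3,0,0) * c i (1,0,2)) :=
          Finset.sum_congr rfl (fun i _ => by rw [hA i]; ring)
      _ = 0 := e402.symm
  have hD : ∀ i, c i (0,2,1) = 0 := by
    refine fun i => sumsq (a := fun i => c i (0,2,1)) ?_ i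
    calc ∑ i, (c i (0,2,1))^2
        = ∑ i, (c i (0,1,2) * c i (0,3,0) + c i (0,2,1) * c i (0,2,1)
            + c i (0,3,0) * c i (0,1,2)) :=
          Finset.sum_congr rfl (fun i _ => by rw [hB i]; ring)
      _ = 0 := e042.symm
  have hE : ∀ i, c i (1,0,2) = 0 := by
    refine fun i => sumsq (a := fun i => c i (1,0,2)) ?_ i
    calc ∑ i, (c i (1,0,2))^2
        = ∑ i, (c i (0,0,3) * c i (2,0,1) + c i (1,0,2) * c i (1,0,2)
            + c i (2,0,1) * c i (0,0,3)) :=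
          Finset.sum_congr rfl (fun i _ => by rw [hC i]; ring)
      _ = 0 := e204.symm
  have hF : ∀ i, c i (0,1,2) = 0 := by
    refine fun i => sumsq (a := fun i => c i (0,1,2)) ?_ i
    calc ∑ i, (c i (0,1,2))^2
        = ∑ i, (c i (0,0,3) * c i (0,2,1) + c i (0,1,2) * c i (0,1,2)
            + c i (0,2,1) * c i (0,0,3)) :=
          Finset.sum_congr rfl (fun i _ => by rw [hD i]; ring)
      _ = 0 := e024.symm
  have hfin : ∑ i, (c i (1,1,1))^2 = -3 := by
    calc ∑ i, (c i (1,1,1))^2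
        = ∑ i, (c i (0,1,2) * c i (2,1,0) + c i (0,2,1) * c i (2,0,1)
            + c i (1,0,2) * c i (1,2,0) + c i (1,1,1) * c i (1,1,1) + c i (1,2,0) * c i (1,0,2)
            + c i (2,0,1) * c i (0,2,1) + c i (2,1,0) * c i (0,1,2)) :=
          Finset.sum_congr rfl (fun i _ => by rw [hC i, hD i, hE i, hF i]; ring)
      _ = -3 := e222.symm
  have hnn : (0:ℝ) ≤ ∑ i, (c i (1,1,1))^2 :=
    Finset.sum_nonneg (fun i _ => sq_nonneg _)
  linarith
end
end
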